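/- (Optimality of quadratic droop) Let B be the susceptance matrix of a connected weighted graph partitioned into loads and inverters, K_I diagonal with strictly negative entries, E_I* ∈ ℝ^m strictly positive, and b_shunt ∈ ℝ^n with −(B_red + [b_shunt]) positive definite with nonpositive off-diagonal entries. Define the cost C(E_L, E_I) = ∑_{i<j} B_{ij}(E_i − E_j)² − ∑_{i∈L} b_{shunt,i} E_i² − ∑_{i∈I} K_i(E_i − E_i*)², where E = (E_L, E_I) ∈ ℝ^{n+m}. Then C is strictly convex on ℝ^{n+m} and has a unique global minimizer (E_L^Z, E_I^Z), given by E_L^Z = (B_red + [b_shunt])^{−1}B_red E_L* and E_I^Z = (B_II + K_I)^{−1}(−B_IL E_L^Z + K_I E_I*); this minimizer has strictly positive entries and is the unique positive equilibrium of the quadratic-droop closed loop with constant-impedance loads Q_i(E_i) = b_{shunt,i} E_i². -/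

import Mathlib

open Matrix

def suscGraph {V : Type*} (B : Matrix V V ℝ) : SimpleGraph V where
  Adj i j := i ≠ j ∧ 0 < B i j ∧ 0 < B j i
  symm := ⟨fun _ _ h => ⟨h.1.symm, h.2.2, h.2.1⟩⟩
  loopless := ⟨fun _ h => h.1 rfl⟩

def IsSusceptance {V : Type*} [Fintype V] [DecidableEq V] (B : Matrix V V ℝ) : Prop :=
  B.IsSymm ∧ (∀ i j, i ≠ j → 0 ≤ B i j) ∧
    (∀ i, B i i = -∑ j ∈ Finset.univ.erase i, B i j) ∧ (suscGraph B).Connected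

section QDAux

set_option linter.unusedSectionVars false

variable {V : Type*} [Fintype V] [DecidableEq V]

/-- Laplacian quadratic form identity. -/
lemma qd_lap_quad {B : Matrix V V ℝ} (hsym : ∀ i j, B i j = B j i)
    (hrow : ∀ i, ∑ j, B i j = 0) (x : V → ℝ) :
    (1 / 2 : ℝ) * (∑ i, ∑ j, B i j * (x i - x j) ^ 2) = -(x ⬝ᵥ B *ᵥ x) := by
  have key : ∀ i j, B i j * (x i - x j) ^ 2
      = x i ^ 2 * B i j + x j ^ 2 * B j i - 2 * (x i * (B i j * x j)) := by
    intro i j; rw [hsym i j]; ring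
  simp_rw [key, Finset.sum_sub_distrib, Finset.sum_add_distrib, ← Finset.mul_sum]
  rw [Finset.sum_comm (f := fun i j => x j ^ 2 * B j i)]
  simp_rw [← Finset.mul_sum, hrow, mul_zero, Finset.sum_const_zero, zero_add]
  have hq : x ⬝ᵥ B *ᵥ x = ∑ i, x i * ∑ j, B i j * x j := by
    simp [dotProduct, Matrix.mulVec]
  rw [hq]; ring

/-- Stieltjes-matrix inverse positivity, nonneg version. -/
lemma qd_mmatrix_nonneg {A : Matrix V V ℝ} (hA : A.PosDef)
    (hoff : ∀ i j, i ≠ j → A i j ≤ 0) {x v : V → ℝ} (hx : A *ᵥ x = v)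
    (hv : ∀ i, 0 ≤ v i) : ∀ i, 0 ≤ x i := by
  set p : V → ℝ := fun i => max (x i) 0 with hp
  set q : V → ℝ := fun i => max (-x i) 0 with hq
  have hpq : ∀ i, x i = p i - q i := by
    intro i; simp only [hp, hq]
    rcases le_total (x i) 0 with h | h
    · rw [max_eq_right h, max_eq_left (by linarith)]; ring
    · rw [max_eq_left h, max_eq_right (by linarith)]; ring
  have hpnn : ∀ i, 0 ≤ p i := fun i => le_max_right _ _
  have hqnn : ∀ i, 0 ≤ q i := fun i => le_max_right _ _
  have hpq0 : ∀ i, q i * p i = 0 := by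
    intro i; simp only [hp, hq]
    rcases le_total (x i) 0 with h | h
    · rw [max_eq_right h]; ring
    · rw [max_eq_right (by linarith : -x i ≤ 0)]; ring
  have hqAp : q ⬝ᵥ A *ᵥ p ≤ 0 := by
    refine Finset.sum_nonpos fun i _ => ?_
    rw [Matrix.mulVec, dotProduct, Finset.mul_sum]
    refine Finset.sum_nonpos fun j _ => ?_
    rcases eq_or_ne i j with rfl | hij
    · have : q i * (A i i * p i) = A i i * (q i * p i) := by ring
      rw [this, hpq0, mul_zero]
    · exact mul_nonpos_of_nonneg_of_nonpos (hqnn i)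
        (mul_nonpos_of_nonpos_of_nonneg (hoff i j hij) (hpnn j))
  have hqv : 0 ≤ q ⬝ᵥ v := Finset.sum_nonneg fun i _ => mul_nonneg (hqnn i) (hv i)
  have hq0 : q = 0 := by
    by_contra hq0
    have hpos := hA.dotProduct_mulVec_pos hq0
    rw [star_trivial] at hpos
    have hxpq : x = p - q := funext fun i => by rw [Pi.sub_apply, hpq]
    have : A *ᵥ q = A *ᵥ p - v := by rw [← hx, hxpq, Matrix.mulVec_sub]; abel
    rw [this, dotProduct_sub] at hpos
    linarith
  intro i
  have h := hpq i
  rw [hq0] at h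
  simp only [Pi.zero_apply, sub_zero] at h
  rw [h]; exact hpnn i

/-- Stieltjes-matrix inverse positivity, strict version. -/
lemma qd_mmatrix_pos {A : Matrix V V ℝ} (hA : A.PosDef)
    (hoff : ∀ i j, i ≠ j → A i j ≤ 0) {x v : V → ℝ} (hx : A *ᵥ x = v)
    (hv : ∀ i, 0 < v i) : ∀ i, 0 < x i := by
  have hnn := qd_mmatrix_nonneg hA hoff hx (fun i => (hv i).le)
  intro i
  rcases (hnn i).lt_or_eq with h | h
  · exact h
  have hvi : v i = ∑ j ∈ Finset.univ.erase i, A i j * x j := by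
    rw [← hx, Matrix.mulVec, dotProduct,
      ← Finset.add_sum_erase _ _ (Finset.mem_univ i), ← h, mul_zero, zero_add]
  have hle : v i ≤ 0 := by
    rw [hvi]
    exact Finset.sum_nonpos fun j hj =>
      mul_nonpos_of_nonpos_of_nonneg (hoff i j (Finset.ne_of_mem_erase hj).symm) (hnn j)
  linarith [hv i]

end QDAux

/-- Positive definiteness of a 2×2 block matrix from the Schur complement. -/
lemma qd_posDef_fromBlocks {m n : Type*} [Fintype m] [Fintype n] [DecidableEq m] [DecidableEq n]
    {A : Matrix m m ℝ} {Bb : Matrix m n ℝ} {D : Matrix n n ℝ}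
    (hA : A.IsHermitian) (hD : D.PosDef) (hS : (A - Bb * D⁻¹ * Bbᴴ).PosDef) :
    (fromBlocks A Bb Bbᴴ D).PosDef := by
  haveI : Invertible D := hD.isUnit.invertible
  rw [Matrix.posDef_iff_dotProduct_mulVec]
  constructor
  · rw [Matrix.isHermitian_fromBlocks_iff]
    exact ⟨hA, rfl, Matrix.conjTranspose_conjTranspose _, hD.1⟩
  intro x hx
  have hid := Matrix.schur_complement_eq₂₂ A Bb (x ∘ Sum.inl) (x ∘ Sum.inr) hD.1
  rw [star_trivial] at hid
  have hxe : Sum.elim (x ∘ Sum.inl) (x ∘ Sum.inr) = x := Sum.elim_comp_inl_inr x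
  rw [star_trivial, Matrix.dotProduct_mulVec, ← hxe, hid]
  rcases eq_or_ne (x ∘ Sum.inl) 0 with h1 | h1
  · have h2 : x ∘ Sum.inr ≠ 0 := by
      intro h2; apply hx
      rw [← hxe, h1, h2]; ext (i | i) <;> rfl
    have hz : (D⁻¹ * Bbᴴ) *ᵥ (x ∘ Sum.inl) + (x ∘ Sum.inr) = x ∘ Sum.inr := by
      rw [h1, Matrix.mulVec_zero, zero_add]
    rw [hz, h1]
    have t1 := hD.dotProduct_mulVec_pos h2
    rw [star_trivial, Matrix.dotProduct_mulVec] at t1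
    have t2 : (0 : m → ℝ) ᵥ* (A - Bb * D⁻¹ * Bbᴴ) ⬝ᵥ (0 : m → ℝ) = 0 := by simp
    rw [star_trivial, star_trivial, t2, add_zero]
    exact t1
  · have t1 := hS.dotProduct_mulVec_pos h1
    rw [star_trivial, Matrix.dotProduct_mulVec] at t1
    have t2 := hD.posSemidef.dotProduct_mulVec_nonneg ((D⁻¹ * Bbᴴ) *ᵥ (x ∘ Sum.inl) + (x ∘ Sum.inr))
    rw [star_trivial, Matrix.dotProduct_mulVec] at t2
    rw [star_trivial, star_trivial]
    exact add_pos_of_nonneg_of_pos t2 t1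

theorem quadratic_droop_optimality {n m : ℕ} (hn : 0 < n) (hm : 0 < m)
    (B : Matrix (Fin n ⊕ Fin m) (Fin n ⊕ Fin m) ℝ) (hB : IsSusceptance B)
    (k : Fin m → ℝ) (hk : ∀ i, k i < 0)
    (EIstar : Fin m → ℝ) (hEIstar : ∀ i, 0 < EIstar i)
    (hinv1 : IsUnit (B.toBlocks₂₂ + Matrix.diagonal k).det)
    (Bred : Matrix (Fin n) (Fin n) ℝ)
    (hBred : Bred = B.toBlocks₁₁ -
      B.toBlocks₁₂ * (B.toBlocks₂₂ + Matrix.diagonal k)⁻¹ * B.toBlocks₂₁)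
    (hinv2 : IsUnit Bred.det)
    (ELstar : Fin n → ℝ)
    (hELstar : ELstar = (-(Bred⁻¹ * B.toBlocks₁₂ *
      (B.toBlocks₂₂ + Matrix.diagonal k)⁻¹ * Matrix.diagonal k)).mulVec EIstar)
    (bshunt : Fin n → ℝ)
    (hM1 : (-(Bred + Matrix.diagonal bshunt)).PosDef)
    (hM2 : ∀ i j, i ≠ j → (-(Bred + Matrix.diagonal bshunt)) i j ≤ 0) :
    let C : ((Fin n ⊕ Fin m) → ℝ) → ℝ := fun E =>
      (1 / 2) * (∑ i, ∑ j, B i j * (E i - E j) ^ 2) -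
        (∑ i, bshunt i * (E (Sum.inl i)) ^ 2) -
        (∑ i, k i * (E (Sum.inr i) - EIstar i) ^ 2)
    let ELZ := (Bred + Matrix.diagonal bshunt)⁻¹.mulVec (Bred.mulVec ELstar)
    let EIZ := (B.toBlocks₂₂ + Matrix.diagonal k)⁻¹.mulVec
      (-(B.toBlocks₂₁.mulVec ELZ) + (Matrix.diagonal k).mulVec EIstar)
    let EZ : (Fin n ⊕ Fin m) → ℝ := Sum.elim ELZ EIZ
    StrictConvexOn ℝ Set.univ C ∧
    (∀ i, 0 < EZ i) ∧
    (∀ E : (Fin n ⊕ Fin m) → ℝ, E ≠ EZ → C EZ < C E) ∧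
    (∀ (EL : Fin n → ℝ) (EI : Fin m → ℝ), (∀ i, 0 < EL i) → (∀ i, 0 < EI i) →
      ((((0 : Fin n → ℝ) = (fun i => bshunt i * (EL i) ^ 2) +
          (Matrix.diagonal EL).mulVec
            (B.toBlocks₁₁.mulVec EL + B.toBlocks₁₂.mulVec EI)) ∧
        ((0 : Fin m → ℝ) =
          (Matrix.diagonal EI).mulVec ((Matrix.diagonal k).mulVec (EI - EIstar)) +
          (Matrix.diagonal EI).mulVec
            (B.toBlocks₂₁.mulVec EL + B.toBlocks₂₂.mulVec EI)))
      ↔ (EL = ELZ ∧ EI = EIZ))) := by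
  obtain ⟨hsymm, hoffd, hdiag, hconn⟩ := hB
  intro C ELZ EIZ EZ
  set BLL := B.toBlocks₁₁ with hBLLdef
  set BLI := B.toBlocks₁₂ with hBLIdef
  set BIL := B.toBlocks₂₁ with hBILdef
  set BII := B.toBlocks₂₂ with hBIIdef
  set K := Matrix.diagonal k with hKdef
  set BK := BII + K with hBKdef
  set P := Bred + Matrix.diagonal bshunt with hPdef
  -- basic symmetry facts
  have hBsym : ∀ i j, B i j = B j i := fun i j => hsymm.apply j i
  have hrow : ∀ i, ∑ j, B i j = 0 := by
    intro i
    rw [← Finset.add_sum_erase _ _ (Finset.mem_univ i), hdiag i, neg_add_cancel]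
  have hBLIapp : ∀ i j, BLI i j = B (Sum.inl i) (Sum.inr j) := fun i j => rfl
  have hBILapp : ∀ i j, BIL i j = B (Sum.inr i) (Sum.inl j) := fun i j => rfl
  have hBLLapp : ∀ i j, BLL i j = B (Sum.inl i) (Sum.inl j) := fun i j => rfl
  have hBIIapp : ∀ i j, BII i j = B (Sum.inr i) (Sum.inr j) := fun i j => rfl
  have hBLInn : ∀ i j, 0 ≤ BLI i j := fun i j => hoffd _ _ (by simp)
  have hBILnn : ∀ i j, 0 ≤ BIL i j := fun i j => hoffd _ _ (by simp)
  -- -B is PSD (graph Laplacian)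
  have hnegBpsd : (-B).PosSemidef := by
    rw [Matrix.posSemidef_iff_dotProduct_mulVec]
    constructor
    · show (-B)ᴴ = -B
      ext i j
      simp only [Matrix.conjTranspose_apply, Matrix.neg_apply, star_trivial]
      rw [hBsym i j]
    · intro x
      rw [star_trivial]
      have hq : x ⬝ᵥ (-B) *ᵥ x = -(x ⬝ᵥ B *ᵥ x) := by
        rw [Matrix.neg_mulVec, dotProduct_neg]
      rw [hq, ← qd_lap_quad hBsym hrow x]
      refine mul_nonneg (by norm_num)
        (Finset.sum_nonneg fun i _ => Finset.sum_nonneg fun j _ => ?_)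
      rcases eq_or_ne i j with rfl | hij
      · simp
      · exact mul_nonneg (hoffd i j hij) (sq_nonneg _)
  -- M := -BK is a Stieltjes matrix
  have hMpd : (-BK).PosDef := by
    have h1 : (-BK) = (-BII) + Matrix.diagonal (-k) := by
      rw [hBKdef, hKdef, neg_add, Matrix.diagonal_neg]
      congr 1
    rw [h1]
    refine Matrix.PosDef.posSemidef_add ?_
      (Matrix.PosDef.diagonal fun i => by
        show 0 < -k i
        linarith [hk i])
    have h2 : (-BII) = (-B).submatrix Sum.inr Sum.inr := by
      ext i j; simp [hBIIdef, Matrix.toBlocks₂₂]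
    rw [h2]
    exact hnegBpsd.submatrix _
  have hMoff : ∀ i j, i ≠ j → (-BK) i j ≤ 0 := by
    intro i j hij
    have : (-BK) i j = -(B (Sum.inr i) (Sum.inr j)) := by
      simp [hBKdef, hKdef, Matrix.diagonal_apply_ne _ hij, hBIIapp]
    rw [this, neg_nonpos]
    exact hoffd _ _ (by simp [hij])
  have hBKcancel : ∀ y, BK *ᵥ (BK⁻¹ *ᵥ y) = y := by
    intro y
    rw [Matrix.mulVec_mulVec, Matrix.mul_nonsing_inv _ hinv1, Matrix.one_mulVec]
  have hBKcancel' : ∀ y, BK⁻¹ *ᵥ (BK *ᵥ y) = y := by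
    intro y
    rw [Matrix.mulVec_mulVec, Matrix.nonsing_inv_mul _ hinv1, Matrix.one_mulVec]
  -- w
  set w := BK⁻¹ *ᵥ (K *ᵥ EIstar) with hwdef
  have hMw : (-BK) *ᵥ w = fun i => -(k i * EIstar i) := by
    rw [Matrix.neg_mulVec, hwdef, hBKcancel]
    funext i
    simp [hKdef, Matrix.mulVec_diagonal]
  have hwpos : ∀ i, 0 < w i := by
    refine qd_mmatrix_pos hMpd hMoff hMw fun i => ?_
    have := mul_neg_of_neg_of_pos (hk i) (hEIstar i)
    simpa using by linarith
  -- P invertibility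
  have hPdet : IsUnit P.det := by
    have hd := hM1.det_pos
    rw [Matrix.det_neg] at hd
    refine isUnit_iff_ne_zero.mpr fun h => ?_
    rw [h, mul_zero] at hd
    exact lt_irrefl _ hd
  have hPcancel : ∀ y, P *ᵥ (P⁻¹ *ᵥ y) = y := by
    intro y
    rw [Matrix.mulVec_mulVec, Matrix.mul_nonsing_inv _ hPdet, Matrix.one_mulVec]
  have hPcancel' : ∀ y, P⁻¹ *ᵥ (P *ᵥ y) = y := by
    intro y
    rw [Matrix.mulVec_mulVec, Matrix.nonsing_inv_mul _ hPdet, Matrix.one_mulVec]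
  -- Bred *ᵥ ELstar
  have hBredELstar : Bred *ᵥ ELstar = -(BLI *ᵥ w) := by
    rw [hELstar, Matrix.mulVec_mulVec]
    have h1 : Bred * -(Bred⁻¹ * BLI * BK⁻¹ * K) = -(BLI * BK⁻¹ * K) := by
      rw [Matrix.mul_neg]
      congr 1
      rw [show Bred⁻¹ * BLI * BK⁻¹ * K = Bred⁻¹ * (BLI * BK⁻¹ * K) by
        rw [Matrix.mul_assoc, Matrix.mul_assoc, Matrix.mul_assoc],
        ← Matrix.mul_assoc, Matrix.mul_nonsing_inv _ hinv2, Matrix.one_mul]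
    rw [h1, Matrix.neg_mulVec]
    congr 1
    rw [hwdef, Matrix.mulVec_mulVec, Matrix.mulVec_mulVec, Matrix.mul_assoc]
  have hELZdef : ELZ = P⁻¹ *ᵥ (Bred *ᵥ ELstar) := rfl
  have hPELZ : P *ᵥ ELZ = -(BLI *ᵥ w) := by
    rw [hELZdef, hPcancel, hBredELstar]
  have hNELZ : (-P) *ᵥ ELZ = BLI *ᵥ w := by
    rw [Matrix.neg_mulVec, hPELZ, neg_neg]
  have hunn : ∀ i, 0 ≤ (BLI *ᵥ w) i := by
    intro i
    show 0 ≤ ∑ j, BLI i j * w j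
    exact Finset.sum_nonneg fun j _ => mul_nonneg (hBLInn i j) (hwpos j).le
  have hELZnn : ∀ i, 0 ≤ ELZ i := qd_mmatrix_nonneg hM1 hM2 hNELZ hunn
  -- strict positivity of ELZ via connectivity
  have hELZpos : ∀ i, 0 < ELZ i := by
    by_contra hc
    push_neg at hc
    obtain ⟨i0, hi0⟩ := hc
    have hi0' : ELZ i0 = 0 := le_antisymm hi0 (hELZnn i0)
    have hstep : ∀ i, ELZ i = 0 → (∀ j, B (Sum.inl i) (Sum.inr j) = 0) ∧
        (∀ j, ELZ j ≠ 0 → B (Sum.inl i) (Sum.inl j) = 0) := by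
      intro i hi
      have hexp : ((-P) *ᵥ ELZ) i = ∑ j, (-P) i j * ELZ j := by
        simp [Matrix.mulVec, dotProduct]
      have hnonpos : ∀ j ∈ Finset.univ, (-P) i j * ELZ j ≤ 0 := by
        intro j _
        rcases eq_or_ne j i with rfl | hji
        · rw [hi, mul_zero]
        · exact mul_nonpos_of_nonpos_of_nonneg (hM2 i j (Ne.symm hji)) (hELZnn j)
      have hle : ((-P) *ᵥ ELZ) i ≤ 0 := by
        rw [hexp]; exact Finset.sum_nonpos hnonpos
      have hu0 : (BLI *ᵥ w) i = 0 := by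
        have h1 := congrFun hNELZ i
        exact le_antisymm (h1 ▸ hle) (hunn i)
      have hterms : ∀ j ∈ Finset.univ, (-P) i j * ELZ j = 0 := by
        rw [← Finset.sum_eq_zero_iff_of_nonpos hnonpos]
        rw [← hexp, congrFun hNELZ i, hu0]
      have hBLIrow : ∀ j, BLI i j = 0 := by
        have h2 : ∀ j ∈ Finset.univ, BLI i j * w j = 0 := by
          rw [← Finset.sum_eq_zero_iff_of_nonneg
            (fun j _ => mul_nonneg (hBLInn i j) (hwpos j).le)]
          exact hu0
        intro j
        rcases mul_eq_zero.mp (h2 j (Finset.mem_univ j)) with h | h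
        · exact h
        · exact absurd h (hwpos j).ne'
      refine ⟨fun j => hBLIrow j, fun j hj => ?_⟩
      have hij : i ≠ j := fun h => hj (h ▸ hi)
      have hNij : (-P) i j = 0 := by
        rcases mul_eq_zero.mp (hterms j (Finset.mem_univ j)) with h | h
        · exact h
        · exact absurd h hj
      have hPij : Bred i j = 0 := by
        have : P i j = 0 := by
          have := hNij
          simp only [Matrix.neg_apply, neg_eq_zero] at this
          exact this
        rw [hPdef] at this
        simpa [Matrix.add_apply, Matrix.diagonal_apply_ne _ hij] using this
      have hmul0 : (BLI * BK⁻¹ * BIL) i j = 0 := by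
        rw [Matrix.mul_assoc, Matrix.mul_apply]
        exact Finset.sum_eq_zero fun t _ => by rw [hBLIrow t, zero_mul]
      have : BLL i j = 0 := by
        rw [hBred] at hPij
        have := hPij
        simp only [Matrix.sub_apply] at this
        rw [hmul0] at this
        linarith
      exact this
    have hclosed : ∀ u v, (suscGraph B).Adj u v →
        (∃ i, u = Sum.inl i ∧ ELZ i = 0) → (∃ i, v = Sum.inl i ∧ ELZ i = 0) := by
      rintro u v hadj ⟨i, rfl, hiz⟩
      obtain ⟨hne, hBpos, -⟩ : Sum.inl i ≠ v ∧ 0 < B (Sum.inl i) v ∧ 0 < B v (Sum.inl i) := hadj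
      rcases v with j | j
      · refine ⟨j, rfl, ?_⟩
        by_contra hjz
        exact absurd ((hstep i hiz).2 j hjz) (ne_of_gt hBpos)
      · exact absurd ((hstep i hiz).1 j) (ne_of_gt hBpos)
    have hwalk : ∀ (a b : Fin n ⊕ Fin m), (suscGraph B).Walk a b →
        (∃ i, a = Sum.inl i ∧ ELZ i = 0) → (∃ i, b = Sum.inl i ∧ ELZ i = 0) := by
      intro a b p
      induction p with
      | nil => exact id
      | cons h p ih => exact fun ha => ih (hclosed _ _ h ha)
    obtain ⟨p⟩ := hconn.preconnected (Sum.inl i0) (Sum.inr ⟨0, hm⟩)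
    obtain ⟨i, hi, -⟩ := hwalk _ _ p ⟨i0, rfl, hi0'⟩
    exact Sum.inr_ne_inl hi
  -- EIZ positivity
  have hEIZdef : EIZ = BK⁻¹ *ᵥ (-(BIL *ᵥ ELZ) + K *ᵥ EIstar) := rfl
  have hMEIZ : (-BK) *ᵥ EIZ = fun i => (BIL *ᵥ ELZ) i + -(k i * EIstar i) := by
    rw [Matrix.neg_mulVec, hEIZdef, hBKcancel]
    funext i
    simp [hKdef, Matrix.mulVec_diagonal]
    ring
  have hEIZpos : ∀ i, 0 < EIZ i := by
    refine qd_mmatrix_pos hMpd hMoff hMEIZ fun i => ?_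
    have h1 : 0 ≤ (BIL *ᵥ ELZ) i := by
      show 0 ≤ ∑ j, BIL i j * ELZ j
      exact Finset.sum_nonneg fun j _ => mul_nonneg (hBILnn i j) (hELZpos j).le
    have h2 := mul_neg_of_neg_of_pos (hk i) (hEIstar i)
    show 0 < (BIL *ᵥ ELZ) i + -(k i * EIstar i)
    linarith
  have hEZdef : EZ = Sum.elim ELZ EIZ := rfl
  -- quadratic-form machinery
  set d : (Fin n ⊕ Fin m) → ℝ := Sum.elim bshunt k with hddef
  set A := -(B + Matrix.diagonal d) with hAdef
  set cvec : (Fin n ⊕ Fin m) → ℝ := Sum.elim (fun _ => 0) (fun i => k i * EIstar i)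
    with hcdef
  have hABlocks : A = fromBlocks (-(BLL + Matrix.diagonal bshunt)) (-BLI) (-BIL) (-BK) := by
    rw [hAdef]
    ext v1 v2
    rcases v1 with i | i <;> rcases v2 with j | j <;>
      simp [hddef, hBKdef, hKdef, Matrix.fromBlocks_apply₁₁, Matrix.fromBlocks_apply₁₂,
        Matrix.fromBlocks_apply₂₁, Matrix.fromBlocks_apply₂₂, Matrix.diagonal_apply,
        Matrix.neg_apply, Matrix.add_apply, hBLLapp, hBLIapp, hBILapp, hBIIapp,
        Sum.inl.injEq, Sum.inr.injEq] <;>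
      split_ifs <;> simp
  have hBLIH : (-BLI)ᴴ = -BIL := by
    ext i j
    simp only [Matrix.conjTranspose_apply, Matrix.neg_apply, star_trivial, neg_inj]
    rw [hBLIapp, hBILapp, hBsym]
  have hinvneg : (-BK)⁻¹ = -(BK⁻¹) := by
    apply Matrix.inv_eq_right_inv
    rw [neg_mul_neg, Matrix.mul_nonsing_inv _ hinv1]
  have hSchur : ((-(BLL + Matrix.diagonal bshunt)) - (-BLI) * (-BK)⁻¹ * (-BLI)ᴴ).PosDef := by
    have he : (-(BLL + Matrix.diagonal bshunt)) - (-BLI) * (-BK)⁻¹ * (-BLI)ᴴ = -P := by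
      rw [hBLIH, hinvneg, hPdef, hBred]
      simp only [Matrix.neg_mul, Matrix.mul_neg, neg_neg]
      noncomm_ring
    rw [he]
    exact hM1
  have hherm : (-(BLL + Matrix.diagonal bshunt)).IsHermitian := by
    show (-(BLL + Matrix.diagonal bshunt))ᴴ = _
    ext i j
    simp only [Matrix.conjTranspose_apply, Matrix.neg_apply, Matrix.add_apply, star_trivial,
      neg_inj]
    rw [hBLLapp, hBLLapp, hBsym]
    congr 1
    rcases eq_or_ne i j with rfl | h
    · rfl
    · rw [Matrix.diagonal_apply_ne _ h, Matrix.diagonal_apply_ne _ (Ne.symm h)]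
  have hApd : A.PosDef := by
    rw [hABlocks, ← hBLIH]
    exact qd_posDef_fromBlocks hherm hMpd hSchur
  have hAsym : ∀ x y : (Fin n ⊕ Fin m) → ℝ, x ⬝ᵥ A *ᵥ y = y ⬝ᵥ A *ᵥ x := by
    have hAentry : ∀ i j, A i j = A j i := by
      intro i j
      rw [hAdef]
      simp only [Matrix.neg_apply, Matrix.add_apply, neg_inj]
      rw [hBsym i j]
      congr 1
      rcases eq_or_ne i j with rfl | h
      · rfl
      · rw [Matrix.diagonal_apply_ne _ h, Matrix.diagonal_apply_ne _ (Ne.symm h)]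
    intro x y
    have e1 : ∀ (u v : (Fin n ⊕ Fin m) → ℝ), u ⬝ᵥ A *ᵥ v = ∑ i, ∑ j, u i * (A i j * v j) := by
      intro u v
      show ∑ i, u i * (∑ j, A i j * v j) = _
      simp_rw [Finset.mul_sum]
    rw [e1, e1, Finset.sum_comm]
    refine Finset.sum_congr rfl fun i _ => Finset.sum_congr rfl fun j _ => ?_
    rw [hAentry j i]
    ring
  -- key block identities for the minimizer
  have heqI : BK *ᵥ EIZ = -(BIL *ᵥ ELZ) + K *ᵥ EIstar := by
    rw [hEIZdef, hBKcancel]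
  have hkey : ∀ z : Fin n → ℝ, BLI *ᵥ (BK⁻¹ *ᵥ (-(BIL *ᵥ z) + K *ᵥ EIstar))
      = -((BLI * BK⁻¹ * BIL) *ᵥ z) + BLI *ᵥ w := by
    intro z
    simp only [hwdef, Matrix.mulVec_add, Matrix.mulVec_neg, Matrix.mulVec_mulVec]
    rw [Matrix.mul_assoc]
  have hsplit : BLL + Matrix.diagonal bshunt = P + BLI * BK⁻¹ * BIL := by
    rw [hPdef, hBred]
    noncomm_ring
  have heqL : (BLL + Matrix.diagonal bshunt) *ᵥ ELZ + BLI *ᵥ EIZ = 0 := by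
    rw [hEIZdef, hkey ELZ, hsplit, Matrix.add_mulVec, hPELZ]
    abel
  have hAEZ : A *ᵥ EZ = -cvec := by
    rw [hABlocks, hEZdef, Matrix.fromBlocks_mulVec, Sum.elim_comp_inl, Sum.elim_comp_inr]
    have h1 : (-(BLL + Matrix.diagonal bshunt)) *ᵥ ELZ + (-BLI) *ᵥ EIZ = 0 := by
      rw [Matrix.neg_mulVec, Matrix.neg_mulVec, ← neg_add, heqL, neg_zero]
    have h2 : (-BIL) *ᵥ ELZ + (-BK) *ᵥ EIZ = fun i => -(k i * EIstar i) := by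
      rw [Matrix.neg_mulVec, Matrix.neg_mulVec, heqI]
      funext i
      simp [hKdef, Matrix.mulVec_diagonal]
    rw [h1, h2]
    funext v
    rcases v with i | i <;> simp [hcdef]
  -- the cost as a quadratic function
  have hCform : ∀ E, C E = E ⬝ᵥ A *ᵥ E + 2 * (E ⬝ᵥ cvec) + -(∑ i, k i * EIstar i ^ 2) := by
    intro E
    show (1 / 2 : ℝ) * (∑ i, ∑ j, B i j * (E i - E j) ^ 2) -
        (∑ i, bshunt i * (E (Sum.inl i)) ^ 2) -
        (∑ i, k i * (E (Sum.inr i) - EIstar i) ^ 2) = _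
    rw [qd_lap_quad hBsym hrow E]
    have hq1 : E ⬝ᵥ A *ᵥ E = -(E ⬝ᵥ B *ᵥ E) -
        ((∑ i, E (Sum.inl i) * (bshunt i * E (Sum.inl i)))
          + ∑ i, E (Sum.inr i) * (k i * E (Sum.inr i))) := by
      rw [hAdef, Matrix.neg_mulVec, dotProduct_neg, Matrix.add_mulVec, dotProduct_add]
      have hd : E ⬝ᵥ (Matrix.diagonal d *ᵥ E)
          = (∑ i, E (Sum.inl i) * (bshunt i * E (Sum.inl i)))
            + ∑ i, E (Sum.inr i) * (k i * E (Sum.inr i)) := by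
        show ∑ v, E v * (Matrix.diagonal d *ᵥ E) v = _
        simp_rw [Matrix.mulVec_diagonal]
        rw [Fintype.sum_sum_type]
        simp [hddef]
      rw [hd]
      ring
    have hq2 : E ⬝ᵥ cvec = ∑ i, E (Sum.inr i) * (k i * EIstar i) := by
      show ∑ v, E v * cvec v = _
      rw [Fintype.sum_sum_type]
      simp [hcdef]
    rw [hq1, hq2]
    have hX : ∀ i : Fin m, k i * (E (Sum.inr i) - EIstar i) ^ 2
        = E (Sum.inr i) * (k i * E (Sum.inr i))
          - 2 * (E (Sum.inr i) * (k i * EIstar i)) + k i * EIstar i ^ 2 := fun i => by ring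
    have hY : ∀ i : Fin n, bshunt i * E (Sum.inl i) ^ 2
        = E (Sum.inl i) * (bshunt i * E (Sum.inl i)) := fun i => by ring
    simp_rw [hX, hY, Finset.sum_add_distrib, Finset.sum_sub_distrib, ← Finset.mul_sum]
    ring
  -- master identity
  have hmaster : ∀ E, C E = (E - EZ) ⬝ᵥ A *ᵥ (E - EZ) + C EZ := by
    intro E
    rw [hCform E, hCform EZ, Matrix.mulVec_sub, dotProduct_sub, sub_dotProduct,
      sub_dotProduct, hAsym EZ E, hAEZ, dotProduct_neg, dotProduct_neg]
    ring
  have hEZpos : ∀ v, 0 < EZ v := by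
    intro v
    rcases v with i | i
    · exact hELZpos i
    · exact hEIZpos i
  clear_value EZ EIZ ELZ C
  refine ⟨?_, ?_, ?_, ?_⟩
  · -- strict convexity
    refine ⟨convex_univ, ?_⟩
    intro x _ y _ hxy a b ha hb hab
    have hb' : b = 1 - a := by linarith
    subst hb'
    simp only [smul_eq_mul]
    rw [hmaster x, hmaster y, hmaster (a • x + (1 - a) • y)]
    have hshift : a • x + (1 - a) • y - EZ = a • (x - EZ) + (1 - a) • (y - EZ) := by
      funext i
      simp only [Pi.add_apply, Pi.sub_apply, Pi.smul_apply, smul_eq_mul]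
      ring
    rw [hshift]
    have hexp : (a • (x - EZ) + (1 - a) • (y - EZ)) ⬝ᵥ
          A *ᵥ (a • (x - EZ) + (1 - a) • (y - EZ))
        = a ^ 2 * ((x - EZ) ⬝ᵥ A *ᵥ (x - EZ))
          + 2 * (a * (1 - a)) * ((x - EZ) ⬝ᵥ A *ᵥ (y - EZ))
          + (1 - a) ^ 2 * ((y - EZ) ⬝ᵥ A *ᵥ (y - EZ)) := by
      simp only [Matrix.mulVec_add, Matrix.mulVec_smul, dotProduct_add, add_dotProduct,
        dotProduct_smul, smul_dotProduct, smul_eq_mul]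
      rw [hAsym (y - EZ) (x - EZ)]
      ring
    have hcross : (x - y) ⬝ᵥ A *ᵥ (x - y)
        = ((x - EZ) ⬝ᵥ A *ᵥ (x - EZ)) - 2 * ((x - EZ) ⬝ᵥ A *ᵥ (y - EZ))
          + ((y - EZ) ⬝ᵥ A *ᵥ (y - EZ)) := by
      have huv : x - y = (x - EZ) - (y - EZ) := by abel
      rw [huv]
      simp only [Matrix.mulVec_sub, dotProduct_sub, sub_dotProduct]
      rw [hAsym y x, hAsym EZ x, hAsym EZ y]
      ring
    have hqpos : 0 < (x - y) ⬝ᵥ A *ᵥ (x - y) := by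
      have h := hApd.dotProduct_mulVec_pos (sub_ne_zero.mpr hxy)
      rwa [star_trivial] at h
    rw [hcross] at hqpos
    rw [hexp]
    nlinarith [mul_pos (mul_pos ha hb) hqpos]
  · exact hEZpos
  · -- unique global minimizer
    intro E hne
    rw [hmaster E]
    have h := hApd.dotProduct_mulVec_pos (sub_ne_zero.mpr hne)
    rw [star_trivial] at h
    linarith
  · -- equilibrium characterization
    intro EL EI hEL hEI
    constructor
    · rintro ⟨heq1, heq2⟩
      have h1 : ∀ i, bshunt i * EL i + ((BLL *ᵥ EL) i + (BLI *ᵥ EI) i) = 0 := by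
        intro i
        have hci := congrFun heq1 i
        simp only [Pi.zero_apply, Pi.add_apply, Matrix.mulVec_diagonal] at hci
        have h2 : EL i * (bshunt i * EL i + ((BLL *ᵥ EL) i + (BLI *ᵥ EI) i)) = 0 := by
          linear_combination -hci
        rcases mul_eq_zero.mp h2 with h | h
        · exact absurd h (hEL i).ne'
        · exact h
      have hv1 : (BLL + Matrix.diagonal bshunt) *ᵥ EL + BLI *ᵥ EI = 0 := by
        funext i
        have : ((BLL + Matrix.diagonal bshunt) *ᵥ EL + BLI *ᵥ EI) i
            = (BLL *ᵥ EL) i + bshunt i * EL i + (BLI *ᵥ EI) i := by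
          simp [Matrix.add_mulVec, Matrix.mulVec_diagonal]
          try ring
        rw [this]
        have := h1 i
        simp only [Pi.zero_apply]
        linarith
      have h2' : ∀ i, k i * (EI i - EIstar i) + ((BIL *ᵥ EL) i + (BII *ᵥ EI) i) = 0 := by
        intro i
        have hci := congrFun heq2 i
        simp only [Pi.zero_apply, Pi.add_apply, hKdef, Matrix.mulVec_diagonal,
          Pi.sub_apply] at hci
        have h2 : EI i * (k i * (EI i - EIstar i) + ((BIL *ᵥ EL) i + (BII *ᵥ EI) i)) = 0 := by
          linear_combination -hci
        rcases mul_eq_zero.mp h2 with h | h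
        · exact absurd h (hEI i).ne'
        · exact h
      have hv2 : BK *ᵥ EI = -(BIL *ᵥ EL) + K *ᵥ EIstar := by
        funext i
        have hl : (BK *ᵥ EI) i = (BII *ᵥ EI) i + k i * EI i := by
          simp [hBKdef, hKdef, Matrix.add_mulVec, Matrix.mulVec_diagonal]
        have hr : (-(BIL *ᵥ EL) + K *ᵥ EIstar) i = -(BIL *ᵥ EL) i + k i * EIstar i := by
          simp [hKdef, Matrix.mulVec_diagonal]
        rw [hl, hr]
        have := h2' i
        linarith
      have hEIeq : EI = BK⁻¹ *ᵥ (-(BIL *ᵥ EL) + K *ᵥ EIstar) := by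
        rw [← hv2, hBKcancel']
      have hPEL : P *ᵥ EL = -(BLI *ᵥ w) := by
        have h3 : BLI *ᵥ EI = -((BLI * BK⁻¹ * BIL) *ᵥ EL) + BLI *ᵥ w := by
          rw [hEIeq]
          exact hkey EL
        rw [hsplit, Matrix.add_mulVec, h3] at hv1
        calc P *ᵥ EL
            = P *ᵥ EL + (BLI * BK⁻¹ * BIL) *ᵥ EL
              + (-((BLI * BK⁻¹ * BIL) *ᵥ EL) + BLI *ᵥ w) - BLI *ᵥ w := by abel
          _ = -(BLI *ᵥ w) := by rw [hv1]; abel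
      have hELeq : EL = ELZ := by
        calc EL = P⁻¹ *ᵥ (P *ᵥ EL) := (hPcancel' EL).symm
          _ = P⁻¹ *ᵥ (-(BLI *ᵥ w)) := by rw [hPEL]
          _ = P⁻¹ *ᵥ (Bred *ᵥ ELstar) := by rw [hBredELstar]
          _ = ELZ := hELZdef.symm
      refine ⟨hELeq, ?_⟩
      rw [hEIeq, hELeq]
      exact hEIZdef.symm
    · rintro ⟨hEL', hEI'⟩
      rw [hEL', hEI']
      constructor
      · funext i
        have hLi := congrFun heqL i
        have hsp : ((BLL + Matrix.diagonal bshunt) *ᵥ ELZ + BLI *ᵥ EIZ) i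
            = (BLL *ᵥ ELZ) i + bshunt i * ELZ i + (BLI *ᵥ EIZ) i := by
          simp [Matrix.add_mulVec, Matrix.mulVec_diagonal]
          try ring
        rw [hsp] at hLi
        simp only [Pi.zero_apply] at hLi
        have hg : ((fun i => bshunt i * ELZ i ^ 2) +
            (Matrix.diagonal ELZ) *ᵥ (BLL *ᵥ ELZ + BLI *ᵥ EIZ)) i
            = bshunt i * ELZ i ^ 2 + ELZ i * ((BLL *ᵥ ELZ) i + (BLI *ᵥ EIZ) i) := by
          simp [Matrix.mulVec_diagonal]
          try ring
        show (0 : ℝ) = _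
        rw [hg]
        linear_combination (-(ELZ i)) * hLi
      · funext i
        have hIi := congrFun heqI i
        have hl : (BK *ᵥ EIZ) i = (BII *ᵥ EIZ) i + k i * EIZ i := by
          simp [hBKdef, hKdef, Matrix.add_mulVec, Matrix.mulVec_diagonal]
        have hr : (-(BIL *ᵥ ELZ) + K *ᵥ EIstar) i = -(BIL *ᵥ ELZ) i + k i * EIstar i := by
          simp [hKdef, Matrix.mulVec_diagonal]
        rw [hl, hr] at hIi
        have hg : ((Matrix.diagonal EIZ) *ᵥ ((Matrix.diagonal k) *ᵥ (EIZ - EIstar)) +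
            (Matrix.diagonal EIZ) *ᵥ (BIL *ᵥ ELZ + BII *ᵥ EIZ)) i
            = EIZ i * (k i * (EIZ i - EIstar i))
              + EIZ i * ((BIL *ᵥ ELZ) i + (BII *ᵥ EIZ) i) := by
          simp [Matrix.mulVec_diagonal]
          try ring
        show (0 : ℝ) = _
        rw [hg]
        linear_combination (-(EIZ i)) * hIi
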